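/- Fix integers n ≥ 1 and 0 < v_1 < v_2 < ⋯ < v_n < v_{n+1} = N. Let d be an aligned degree vector such that the top block d^n = (d^n_1, …, d^n_{v_n}) is not identically zero. Then for every 0 ≤ k ≤ n − 1, Σ_{i=n−k}^{n} ( T_i(d) − R_i(d) ) < − Σ_{j=1}^{v_{n−k}} d^{n−k}_j. -/

import Mathlib

open Finset

/-- `Bb m = m(m+1)/2` for `m ≥ 0` and `Bb m = 0` for `m < 0`. -/
def Bb (m : ℤ) : ℤ := if 0 ≤ m then m * (m + 1) / 2 else 0

/-- `T_i(d) = Σ_{1≤j,k≤v_i} B(d^i_j − d^i_k) − Σ_{1≤j≤v_i} Σ_{1≤r≤v_i} B(d^i_j − d^{i+1}_r)`. -/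
def Tt (v : ℕ → ℕ) (d : ℕ → ℕ → ℕ) (i : ℕ) : ℤ :=
  (∑ j ∈ Icc 1 (v i), ∑ k ∈ Icc 1 (v i), Bb ((d i j : ℤ) - (d i k : ℤ)))
    - ∑ j ∈ Icc 1 (v i), ∑ r ∈ Icc 1 (v i), Bb ((d i j : ℤ) - (d (i + 1) r : ℤ))

/-- `R_i(d) = Σ_{1≤j≤v_i} Σ_{v_i < r ≤ v_{i+1}} B(d^i_j − d^{i+1}_r)`. -/
def Rr (v : ℕ → ℕ) (d : ℕ → ℕ → ℕ) (i : ℕ) : ℤ :=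
  ∑ j ∈ Icc 1 (v i), ∑ r ∈ Icc (v i + 1) (v (i + 1)), Bb ((d i j : ℤ) - (d (i + 1) r : ℤ))

/-- A degree vector `d` is aligned if for every `1 ≤ i ≤ n` there is an injection
`f_i : {1,…,v_i} → {1,…,v_{i+1}}` with `d^i_j ≥ d^{i+1}_{f_i(j)}` for all `j`. -/
def Aligned (n : ℕ) (v : ℕ → ℕ) (d : ℕ → ℕ → ℕ) : Prop :=
  ∀ i, 1 ≤ i → i ≤ n → ∃ f : ℕ → ℕ,
    Set.InjOn f (Set.Icc 1 (v i)) ∧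
    ∀ j, 1 ≤ j → j ≤ v i → 1 ≤ f j ∧ f j ≤ v (i + 1) ∧ d (i + 1) (f j) ≤ d i j

lemma Bb_nonneg (m : ℤ) : 0 ≤ Bb m := by
  unfold Bb
  by_cases h : 0 ≤ m <;> simp [h]
  exact Int.ediv_nonneg (by nlinarith) (by norm_num)

lemma Bb_mono {m m' : ℤ} (h : m ≤ m') : Bb m ≤ Bb m' := by
  unfold Bb
  by_cases h1 : 0 ≤ m <;> by_cases h2 : 0 ≤ m' <;> simp [h1, h2]
  · exact Int.ediv_le_ediv (by norm_num) (by nlinarith)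
  · omega
  · exact Int.ediv_nonneg (by nlinarith) (by norm_num)

lemma le_Bb (m : ℤ) : m ≤ Bb m := by
  unfold Bb
  by_cases h : 0 ≤ m <;> simp [h]
  · rw [Int.le_ediv_iff_mul_le (by norm_num)]
    obtain rfl | h1 : m = 0 ∨ 1 ≤ m := by omega
    · norm_num
    · nlinarith [mul_le_mul_of_nonneg_left h1 (by linarith : (0:ℤ) ≤ m)]
  · omega

lemma Bb_zero : Bb 0 = 0 := by norm_num [Bb]

lemma Icc_split (m M : ℕ) (h : m ≤ M) (g : ℕ → ℤ) :
    (∑ r ∈ Icc 1 m, g r) + ∑ r ∈ Icc (m + 1) M, g r = ∑ r ∈ Icc 1 M, g r := by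
  have h1 : Icc 1 m = Ioc 0 m := Finset.Icc_add_one_left_eq_Ioc 0 m
  have h2 : Icc (m + 1) M = Ioc m M := Finset.Icc_add_one_left_eq_Ioc m M
  have h3 : Icc 1 M = Ioc 0 M := Finset.Icc_add_one_left_eq_Ioc 0 M
  rw [h1, h2, h3]
  exact Finset.sum_Ioc_consecutive g (Nat.zero_le m) h

lemma TR_eq (v : ℕ → ℕ) (d : ℕ → ℕ → ℕ) (i : ℕ) (hv : v i ≤ v (i + 1)) :
    Tt v d i - Rr v d i
      = ∑ j ∈ Icc 1 (v i),
          ((∑ k ∈ Icc 1 (v i), Bb ((d i j : ℤ) - (d i k : ℤ)))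
            - ∑ r ∈ Icc 1 (v (i + 1)), Bb ((d i j : ℤ) - (d (i + 1) r : ℤ))) := by
  unfold Tt Rr
  rw [Finset.sum_sub_distrib]
  have hsplit : ∀ j ∈ Icc 1 (v i),
      (∑ r ∈ Icc 1 (v (i + 1)), Bb ((d i j : ℤ) - (d (i + 1) r : ℤ)))
        = (∑ r ∈ Icc 1 (v i), Bb ((d i j : ℤ) - (d (i + 1) r : ℤ)))
          + ∑ r ∈ Icc (v i + 1) (v (i + 1)), Bb ((d i j : ℤ) - (d (i + 1) r : ℤ)) :=
    fun j _ => (Icc_split (v i) (v (i + 1)) hv _).symm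
  rw [Finset.sum_congr rfl hsplit, Finset.sum_add_distrib]
  ring

lemma step_lemma (v : ℕ → ℕ) (d : ℕ → ℕ → ℕ) (i : ℕ)
    (hv : v i ≤ v (i + 1)) (f : ℕ → ℕ) (hinj : Set.InjOn f (Set.Icc 1 (v i)))
    (hf : ∀ j, 1 ≤ j → j ≤ v i → 1 ≤ f j ∧ f j ≤ v (i + 1) ∧ d (i + 1) (f j) ≤ d i j) :
    Tt v d i - Rr v d i ≤
      (∑ r ∈ Icc 1 (v (i + 1)), (d (i + 1) r : ℤ)) - ∑ j ∈ Icc 1 (v i), (d i j : ℤ) := by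
  rw [TR_eq v d i hv]
  have hinj' : ∀ x ∈ Icc 1 (v i), ∀ y ∈ Icc 1 (v i), f x = f y → x = y := by
    intro x hx y hy hxy
    exact hinj (by simpa [Set.mem_Icc] using mem_Icc.mp hx)
      (by simpa [Set.mem_Icc] using mem_Icc.mp hy) hxy
  have himgsub : (Icc 1 (v i)).image f ⊆ Icc 1 (v (i + 1)) := by
    intro r hr
    simp only [mem_image] at hr
    obtain ⟨k, hk, rfl⟩ := hr
    simp only [mem_Icc] at hk ⊢
    exact ⟨(hf k hk.1 hk.2).1, (hf k hk.1 hk.2).2.1⟩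
  have hj : ∀ j ∈ Icc 1 (v i),
      (∑ k ∈ Icc 1 (v i), Bb ((d i j : ℤ) - (d i k : ℤ)))
        - ∑ r ∈ Icc 1 (v (i + 1)), Bb ((d i j : ℤ) - (d (i + 1) r : ℤ))
      ≤ (d (i + 1) (f j) : ℤ) - (d i j : ℤ) := by
    intro j hjm
    have himg : ∑ k ∈ Icc 1 (v i), Bb ((d i j : ℤ) - (d (i + 1) (f k) : ℤ))
        ≤ ∑ r ∈ Icc 1 (v (i + 1)), Bb ((d i j : ℤ) - (d (i + 1) r : ℤ)) := by
      calc ∑ k ∈ Icc 1 (v i), Bb ((d i j : ℤ) - (d (i + 1) (f k) : ℤ))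
          = ∑ r ∈ (Icc 1 (v i)).image f, Bb ((d i j : ℤ) - (d (i + 1) r : ℤ)) :=
            (Finset.sum_image (s := Icc 1 (v i)) (g := f)
              (f := fun r => Bb ((d i j : ℤ) - (d (i + 1) r : ℤ))) hinj').symm
        _ ≤ ∑ r ∈ Icc 1 (v (i + 1)), Bb ((d i j : ℤ) - (d (i + 1) r : ℤ)) :=
            Finset.sum_le_sum_of_subset_of_nonneg himgsub (fun r _ _ => Bb_nonneg _)
    have hterm : ∀ k ∈ Icc 1 (v i),
        Bb ((d i j : ℤ) - (d i k : ℤ))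
          + (if k = j then (d i j : ℤ) - (d (i + 1) (f j) : ℤ) else 0)
        ≤ Bb ((d i j : ℤ) - (d (i + 1) (f k) : ℤ)) := by
      intro k hk
      simp only [mem_Icc] at hk
      by_cases hkj : k = j
      · subst hkj
        simp only [sub_self, Bb_zero, if_pos rfl, zero_add]
        exact le_Bb _
      · simp only [if_neg hkj, add_zero]
        apply Bb_mono
        have := (hf k hk.1 hk.2).2.2
        have : (d (i + 1) (f k) : ℤ) ≤ (d i k : ℤ) := by exact_mod_cast this
        linarith
    have hs := Finset.sum_le_sum hterm
    rw [Finset.sum_add_distrib, Finset.sum_ite_eq', if_pos hjm] at hs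
    linarith
  have htotal := Finset.sum_le_sum hj
  have hbsum : ∑ j ∈ Icc 1 (v i), (d (i + 1) (f j) : ℤ)
      ≤ ∑ r ∈ Icc 1 (v (i + 1)), (d (i + 1) r : ℤ) := by
    calc ∑ j ∈ Icc 1 (v i), (d (i + 1) (f j) : ℤ)
        = ∑ r ∈ (Icc 1 (v i)).image f, (d (i + 1) r : ℤ) :=
          (Finset.sum_image (s := Icc 1 (v i)) (g := f)
            (f := fun r => ((d (i + 1) r : ℤ))) hinj').symm
      _ ≤ ∑ r ∈ Icc 1 (v (i + 1)), (d (i + 1) r : ℤ) :=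
          Finset.sum_le_sum_of_subset_of_nonneg himgsub (fun r _ _ => by positivity)
  have e1 : ∑ j ∈ Icc 1 (v i), ((d (i + 1) (f j) : ℤ) - (d i j : ℤ))
      = (∑ j ∈ Icc 1 (v i), (d (i + 1) (f j) : ℤ)) - ∑ j ∈ Icc 1 (v i), (d i j : ℤ) :=
    Finset.sum_sub_distrib _ _
  linarith [htotal, e1, hbsum]

lemma base_lemma (n : ℕ) (v : ℕ → ℕ) (d : ℕ → ℕ → ℕ)
    (hv : v n < v (n + 1)) (hdtop : ∀ r, d (n + 1) r = 0)
    (hne : ∃ j, 1 ≤ j ∧ j ≤ v n ∧ d n j ≠ 0) :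
    Tt v d n - Rr v d n < -(∑ j ∈ Icc 1 (v n), (d n j : ℤ)) := by
  rw [TR_eq v d n (le_of_lt hv)]
  have hb : ∀ j, (∑ r ∈ Icc 1 (v (n + 1)), Bb ((d n j : ℤ) - (d (n + 1) r : ℤ)))
      = (v (n + 1) : ℤ) * Bb ((d n j : ℤ)) := by
    intro j
    have hc : ∀ r ∈ Icc 1 (v (n + 1)),
        Bb ((d n j : ℤ) - (d (n + 1) r : ℤ)) = Bb ((d n j : ℤ)) := fun r _ => by
      simp [hdtop r]
    rw [Finset.sum_congr rfl hc, Finset.sum_const, Nat.card_Icc]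
    simp [nsmul_eq_mul]
  have hj : ∀ j ∈ Icc 1 (v n),
      (∑ k ∈ Icc 1 (v n), Bb ((d n j : ℤ) - (d n k : ℤ)))
        - ∑ r ∈ Icc 1 (v (n + 1)), Bb ((d n j : ℤ) - (d (n + 1) r : ℤ))
      ≤ -(d n j : ℤ) - Bb ((d n j : ℤ)) := by
    intro j hjm
    rw [hb j]
    have hterm : ∀ k ∈ Icc 1 (v n),
        Bb ((d n j : ℤ) - (d n k : ℤ)) + (if k = j then Bb ((d n j : ℤ)) else 0)
          ≤ Bb ((d n j : ℤ)) := by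
      intro k hk
      by_cases hkj : k = j
      · subst hkj; simp [sub_self, Bb_zero]
      · simp only [if_neg hkj, add_zero]
        apply Bb_mono
        have : (0 : ℤ) ≤ (d n k : ℤ) := by positivity
        linarith
    have hs := Finset.sum_le_sum hterm
    rw [Finset.sum_add_distrib, Finset.sum_ite_eq', if_pos hjm, Finset.sum_const,
      Nat.card_Icc] at hs
    simp only [Nat.add_sub_cancel, nsmul_eq_mul] at hs
    have h1 : (v n : ℤ) + 1 ≤ (v (n + 1) : ℤ) := by exact_mod_cast hv
    have h2 : (d n j : ℤ) ≤ Bb ((d n j : ℤ)) := le_Bb _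
    have h3 : (0 : ℤ) ≤ Bb ((d n j : ℤ)) := Bb_nonneg _
    nlinarith
  have htotal := Finset.sum_le_sum hj
  have e1 : ∑ j ∈ Icc 1 (v n), (-(d n j : ℤ) - Bb ((d n j : ℤ)))
      = -(∑ j ∈ Icc 1 (v n), (d n j : ℤ)) - ∑ j ∈ Icc 1 (v n), Bb ((d n j : ℤ)) := by
    rw [Finset.sum_sub_distrib, Finset.sum_neg_distrib]
  have hBpos : (1 : ℤ) ≤ ∑ j ∈ Icc 1 (v n), Bb ((d n j : ℤ)) := by
    obtain ⟨j0, hj1, hj2, hj3⟩ := hne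
    have hmem : j0 ∈ Icc 1 (v n) := mem_Icc.mpr ⟨hj1, hj2⟩
    have h1 : (1 : ℤ) ≤ (d n j0 : ℤ) := by exact_mod_cast Nat.one_le_iff_ne_zero.mpr hj3
    have h2 : (1 : ℤ) ≤ Bb ((d n j0 : ℤ)) := le_trans h1 (le_Bb _)
    calc (1 : ℤ) ≤ Bb ((d n j0 : ℤ)) := h2
      _ ≤ ∑ j ∈ Icc 1 (v n), Bb ((d n j : ℤ)) :=
          Finset.single_le_sum (fun j _ => Bb_nonneg _) hmem
  linarith [htotal, e1, hBpos]

/-- Inductive claim on the partial sums `S_k = Σ_{i=n−k}^{n} (T_i − R_i)`: if `d` is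
aligned and the top block `d^n` is not identically zero, then for every
`0 ≤ k ≤ n − 1`, `Σ_{i=n−k}^{n} (T_i(d) − R_i(d)) < − Σ_{j=1}^{v_{n−k}} d^{n−k}_j`. -/
theorem partial_sum_degree_bound (n : ℕ) (hn : 1 ≤ n) (v : ℕ → ℕ) (d : ℕ → ℕ → ℕ)
    (hv1 : 0 < v 1) (hvmono : ∀ i, 1 ≤ i → i ≤ n → v i < v (i + 1))
    (hdtop : ∀ r, d (n + 1) r = 0)
    (halign : Aligned n v d)
    (hne : ∃ j, 1 ≤ j ∧ j ≤ v n ∧ d n j ≠ 0) :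
    ∀ k, k ≤ n - 1 →
      (∑ i ∈ Icc (n - k) n, (Tt v d i - Rr v d i))
        < -(∑ j ∈ Icc 1 (v (n - k)), (d (n - k) j : ℤ)) := by
  intro k
  induction k with
  | zero =>
    intro _
    simp only [Nat.sub_zero]
    rw [Finset.Icc_self, Finset.sum_singleton]
    exact base_lemma n v d (hvmono n hn le_rfl) hdtop hne
  | succ k ih =>
    intro hk
    have hk' : k ≤ n - 1 := by omega
    have h1 : 1 ≤ n - (k + 1) := by omega
    have h2 : n - (k + 1) ≤ n := by omega
    have hi1 : n - (k + 1) + 1 = n - k := by omega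
    have hins : Icc (n - (k + 1)) n = insert (n - (k + 1)) (Icc (n - k) n) := by
      ext x
      simp only [mem_Icc, mem_insert]
      omega
    rw [hins, Finset.sum_insert (by simp only [mem_Icc]; omega)]
    obtain ⟨f, hfinj, hfprop⟩ := halign (n - (k + 1)) h1 h2
    have hstep := step_lemma v d (n - (k + 1)) (le_of_lt (hvmono _ h1 h2)) f hfinj hfprop
    rw [hi1] at hstep
    have hIH := ih hk'
    linarith
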